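/- For every n ≥ 1 and every integer k ≥ 3, there exists an n-vertex planar graph G such that every subset I ⊆ V(G) for which the induced subgraph G[I] has maximum degree at most k satisfies |I| ≤ ((k+2)/(k+4))·n + 2. -/

import Mathlib

open SimpleGraph

/-- `H` is a minor of `G`: disjoint connected branch sets witnessing every edge of `H`. -/
def IsMinorOf {β α : Type} (H : SimpleGraph β) (G : SimpleGraph α) : Prop :=
  ∃ f : β → Set α,
    (∀ b, (f b).Nonempty) ∧
    (∀ b, (G.induce (f b)).Connected) ∧
    (Pairwise fun b₁ b₂ => Disjoint (f b₁) (f b₂)) ∧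
    ∀ ⦃b₁ b₂⦄, H.Adj b₁ b₂ → ∃ u ∈ f b₁, ∃ v ∈ f b₂, G.Adj u v

/-- A graph is planar iff it has neither a `K₅` nor a `K₃,₃` minor (Wagner's theorem). -/
def IsPlanar {α : Type} (G : SimpleGraph α) : Prop :=
  ¬ IsMinorOf (completeGraph (Fin 5)) G ∧
  ¬ IsMinorOf (completeBipartiteGraph (Fin 3) (Fin 3)) G

/-- A graph is outerplanar iff it has neither a `K₄` nor a `K₂,₃` minor. -/
def IsOuterplanar {α : Type} (G : SimpleGraph α) : Prop :=
  ¬ IsMinorOf (completeGraph (Fin 4)) G ∧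
  ¬ IsMinorOf (completeBipartiteGraph (Fin 2) (Fin 3)) G

/-- An outerpath is (isomorphic to) a spanning subgraph of the square of a path:
there is a linear ordering of the vertices in which every edge joins vertices
at distance at most `2`. -/
def IsOuterpath {α : Type} [Fintype α] (G : SimpleGraph α) : Prop :=
  ∃ σ : α ≃ Fin (Fintype.card α),
    ∀ u v, G.Adj u v → (σ u).val ≤ (σ v).val + 2 ∧ (σ v).val ≤ (σ u).val + 2

/-- Arc of the outer cycle `0,1,…,n-1` from `a` to `b` (inclusive): the vertex set of
one of the two `ab`-split subgraphs of a maximal outerplanar graph whose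
outerplane embedding has the canonical outer cycle on `ZMod n`. -/
def arc (n : ℕ) [NeZero n] (a b : ZMod n) : Set (ZMod n) := {w | (w - a).val ≤ (b - a).val}

/-- For every `n ≥ 1` and `k ≥ 3` there is an `n`-vertex planar graph in which every
vertex subset inducing a subgraph of maximum degree at most `k` has at most
`((k+2)/(k+4))·n + 2` vertices. -/
def gg (n k : ℕ) : SimpleGraph (Fin n) where
  Adj u v := u.1 / (k+4) = v.1 / (k+4) ∧ u.1 / (k+4) < n / (k+4) ∧
    ((u.1 % (k+4) < 2 ∧ 2 ≤ v.1 % (k+4)) ∨ (v.1 % (k+4) < 2 ∧ 2 ≤ u.1 % (k+4)))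
  symm := by
    constructor
    rintro u v ⟨h1, h2, h3⟩
    exact ⟨h1.symm, h1 ▸ h2, h3.symm⟩
  loopless := by
    constructor
    rintro v ⟨_, _, h3⟩
    omega

lemma gg_unit_eq {n k : ℕ} (s : Set (Fin n)) (hc : ((gg n k).induce s).Connected)
    (u v : s) : (u : Fin n).1 / (k+4) = (v : Fin n).1 / (k+4) := by
  obtain ⟨p⟩ := hc.preconnected u v
  induction p with
  | nil => rfl
  | cons h p ih => exact h.1.trans ih

lemma gg_no_minor (n k : ℕ) {β : Type} (H : SimpleGraph β)
    (c0 c1 c2 d : β) (h01 : c0 ≠ c1) (h02 : c0 ≠ c2) (h12 : c1 ≠ c2)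
    (hd0 : H.Adj c0 d) (hd1 : H.Adj c1 d) (hd2 : H.Adj c2 d)
    (hdeg : ∀ b, ∃ b1 b2 b3, b1 ≠ b2 ∧ b1 ≠ b3 ∧ b2 ≠ b3 ∧
      H.Adj b b1 ∧ H.Adj b b2 ∧ H.Adj b b3) :
    ¬ IsMinorOf H (gg n k) := by
  rintro ⟨f, hne, hconn, hdisj, hadj⟩
  have hdisj' : ∀ i j : β, i ≠ j → ∀ x, x ∈ f i → x ∈ f j → False := fun i j hij x h1 h2 =>
    Set.disjoint_left.mp (hdisj hij) h1 h2
  obtain ⟨u0, hu0, v0, hv0, huv0⟩ := hadj hd0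
  obtain ⟨Q, hQdef⟩ : ∃ Q, (v0 : Fin n).1 / (k+4) = Q := ⟨_, rfl⟩
  have hQh : Q < n / (k+4) := by
    have h2 := huv0.2.1
    rw [huv0.1, hQdef] at h2
    exact h2
  -- every element of f c (for c adjacent to d) has unit Q
  have key : ∀ c, H.Adj c d → ∀ x, x ∈ f c → (x : Fin n).1 / (k+4) = Q := by
    intro c hc x hx
    obtain ⟨u, hu, v, hv, huv⟩ := hadj hc
    have e1 : (x : Fin n).1 / (k+4) = (u : Fin n).1 / (k+4) :=
      gg_unit_eq (f c) (hconn c) ⟨x, hx⟩ ⟨u, hu⟩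
    have e2 : (v : Fin n).1 / (k+4) = (v0 : Fin n).1 / (k+4) :=
      gg_unit_eq (f d) (hconn d) ⟨v, hv⟩ ⟨v0, hv0⟩
    rw [e1, huv.1, e2, hQdef]
  -- the two hubs of unit Q
  have hQm : Q * (k+4) + 1 < n := by
    have h1 : (Q + 1) * (k+4) ≤ (n / (k+4)) * (k+4) := Nat.mul_le_mul_right (k+4) hQh
    have h2 : (n / (k+4)) * (k+4) ≤ n := Nat.div_mul_le_self n (k+4)
    nlinarith
  set A : Fin n := ⟨Q * (k+4), lt_trans (Nat.lt_succ_self _) hQm⟩ with hA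
  set B : Fin n := ⟨Q * (k+4) + 1, hQm⟩ with hB
  have hub_id : ∀ x : Fin n, x.1 / (k+4) = Q → x.1 % (k+4) < 2 → x = A ∨ x = B := by
    intro x hdiv hmod
    have h := Nat.div_add_mod x.1 (k+4)
    rw [hdiv, Nat.mul_comm] at h
    have hA1 : A.1 = Q * (k+4) := rfl
    have hB1 : B.1 = Q * (k+4) + 1 := rfl
    rcases (by omega : x.1 = Q * (k+4) ∨ x.1 = Q * (k+4) + 1) with hh | hh
    · exact Or.inl (Fin.ext (by omega))
    · exact Or.inr (Fin.ext (by omega))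
  -- pick a hub-free branch set among c0 c1 c2
  obtain ⟨b0, hb0adj, hb0A, hb0B⟩ :
      ∃ b0, H.Adj b0 d ∧ A ∉ f b0 ∧ B ∉ f b0 := by
    by_cases pA0 : A ∈ f c0
    · by_cases pB1 : B ∈ f c1
      · exact ⟨c2, hd2, fun h => hdisj' c0 c2 h02 A pA0 h,
          fun h => hdisj' c1 c2 h12 B pB1 h⟩
      · by_cases pA1 : A ∈ f c1
        · exact (hdisj' c0 c1 h01 A pA0 pA1).elim
        · exact ⟨c1, hd1, pA1, pB1⟩
    · by_cases pB0 : B ∈ f c0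
      · by_cases pA1 : A ∈ f c1
        · exact ⟨c2, hd2, fun h => hdisj' c1 c2 h12 A pA1 h,
            fun h => hdisj' c0 c2 h02 B pB0 h⟩
        · by_cases pB1 : B ∈ f c1
          · exact (hdisj' c0 c1 h01 B pB0 pB1).elim
          · exact ⟨c1, hd1, pA1, pB1⟩
      · exact ⟨c0, hd0, pA0, pB0⟩
  have hb0unit : ∀ x, x ∈ f b0 → (x : Fin n).1 / (k+4) = Q := key b0 hb0adj
  have hb0leaf : ∀ x, x ∈ f b0 → 2 ≤ (x : Fin n).1 % (k+4) := by
    intro x hx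
    by_contra hlt
    rcases hub_id x (hb0unit x hx) (by omega) with rfl | rfl
    · exact hb0A hx
    · exact hb0B hx
  -- f b0 has no internal edges, hence is a singleton
  have hnoedge : ∀ a b : (f b0 : Set (Fin n)), ¬ ((gg n k).induce (f b0)).Adj a b := by
    intro a b hab
    have h1 := hb0leaf _ a.2
    have h2 := hb0leaf _ b.2
    have h3 : ((a : Fin n).1 % (k+4) < 2 ∧ 2 ≤ (b : Fin n).1 % (k+4)) ∨
        ((b : Fin n).1 % (k+4) < 2 ∧ 2 ≤ (a : Fin n).1 % (k+4)) := hab.2.2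
    omega
  obtain ⟨x, hx⟩ := hne b0
  have hsing : ∀ y, y ∈ f b0 → y = x := by
    intro y hy
    obtain ⟨p⟩ := (hconn b0).preconnected ⟨y, hy⟩ ⟨x, hx⟩
    cases p with
    | nil => rfl
    | cons h p => exact (hnoedge _ _ h).elim
  -- each neighbor of b0 contains a hub
  have hv : ∀ bi, H.Adj b0 bi → (A ∈ f bi ∨ B ∈ f bi) := by
    intro bi e
    obtain ⟨u, hu, v, hv', huv⟩ := hadj e
    have hxleaf := hb0leaf u hu
    have hvmod : (v : Fin n).1 % (k+4) < 2 := by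
      rcases huv.2.2 with ⟨h1, _⟩ | ⟨h1, _⟩
      · omega
      · exact h1
    have hvunit : (v : Fin n).1 / (k+4) = Q := by
      rw [← huv.1]; exact hb0unit u hu
    rcases hub_id v hvunit hvmod with rfl | rfl
    · exact Or.inl hv'
    · exact Or.inr hv'
  obtain ⟨b1, b2, b3, h12', h13', h23', e1, e2, e3⟩ := hdeg b0
  rcases hv b1 e1 with p1 | p1 <;> rcases hv b2 e2 with p2 | p2 <;>
    rcases hv b3 e3 with p3 | p3
  · exact hdisj' b1 b2 h12' A p1 p2
  · exact hdisj' b1 b2 h12' A p1 p2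
  · exact hdisj' b1 b3 h13' A p1 p3
  · exact hdisj' b2 b3 h23' B p2 p3
  · exact hdisj' b2 b3 h23' A p2 p3
  · exact hdisj' b1 b3 h13' B p1 p3
  · exact hdisj' b1 b2 h12' B p1 p2
  · exact hdisj' b1 b2 h12' B p1 p2

lemma gg_count (n k : ℕ) (hk : 3 ≤ k) (I : Set (Fin n))
    (hI : ∀ v ∈ I, (((gg n k).neighborSet v) ∩ I).ncard ≤ k) :
    I.ncard + 2 * (n / (k+4)) ≤ n := by
  classical
  have hkp : 0 < k + 4 := by omega
  have hfin : I.Finite := Set.toFinite I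
  set J := hfin.toFinset with hJ
  have hJI : ∀ v, v ∈ J ↔ v ∈ I := fun v => hfin.mem_toFinset
  have hcard : I.ncard = J.card := Set.ncard_eq_toFinset_card I hfin
  have hme : n / (k+4) * (k+4) ≤ n := Nat.div_mul_le_self n (k+4)
  -- sum over fibers
  have hsplit : J.card = ∑ i ∈ Finset.range (n/(k+4) + 1),
      (J.filter (fun v => min (v.1 / (k+4)) (n/(k+4)) = i)).card := by
    apply Finset.card_eq_sum_card_fiberwise
    intro x _
    simp only [Finset.mem_coe, Finset.mem_range]
    omega
  -- bound on each unit fiber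
  have hfiber : ∀ i < n/(k+4),
      (J.filter (fun v => min (v.1 / (k+4)) (n/(k+4)) = i)).card ≤ k + 2 := by
    intro i hi
    set F := J.filter (fun v => min (v.1 / (k+4)) (n/(k+4)) = i) with hF
    have hFdiv : ∀ v ∈ F, v.1 / (k+4) = i ∧ v ∈ I := by
      intro v hv
      rw [hF, Finset.mem_filter] at hv
      exact ⟨by omega, (hJI v).mp hv.1⟩
    have hin : i * (k+4) + 1 < n := by
      have h1 : (i + 1) * (k+4) ≤ (n / (k+4)) * (k+4) := Nat.mul_le_mul_right (k+4) hi
      nlinarith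
    set A : Fin n := ⟨i * (k+4), lt_trans (Nat.lt_succ_self _) hin⟩ with hA
    set B : Fin n := ⟨i * (k+4) + 1, hin⟩ with hB
    have hA1 : A.1 = i * (k+4) := rfl
    have hB1 : B.1 = i * (k+4) + 1 := rfl
    have hAdiv : A.1 / (k+4) = i := by rw [hA1]; exact Nat.mul_div_cancel i hkp
    have hAmod : A.1 % (k+4) < 2 := by
      rw [hA1]
      have : i * (k+4) % (k+4) = 0 := Nat.mul_mod_left i (k+4)
      omega
    have hBdiv : B.1 / (k+4) = i := by
      rw [hB1, Nat.mul_comm i (k+4), Nat.mul_add_div hkp, Nat.div_eq_of_lt (by omega)]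
      omega
    have hBmod : B.1 % (k+4) < 2 := by
      rw [hB1, Nat.mul_comm i (k+4), Nat.mul_add_mod]
      rw [Nat.mod_eq_of_lt (by omega)]
      omega
    have hub_id : ∀ v : Fin n, v.1 / (k+4) = i → v.1 % (k+4) < 2 → v = A ∨ v = B := by
      intro v hdiv hmod
      have hd := Nat.div_add_mod v.1 (k+4)
      rw [hdiv, Nat.mul_comm] at hd
      rcases (by omega : v.1 = i * (k+4) ∨ v.1 = i * (k+4) + 1) with hh | hh
      · exact Or.inl (Fin.ext (by omega))
      · exact Or.inr (Fin.ext (by omega))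
    have hub_bound : ∀ a : Fin n, a ∈ I → a.1 / (k+4) = i → a.1 % (k+4) < 2 →
        (F \ {A, B}).card ≤ k := by
      intro a haI hadiv hamod
      have hsub : F \ {A, B} ⊆ (((gg n k).neighborSet a ∩ I).toFinite).toFinset := by
        intro v hv
        rw [Finset.mem_sdiff] at hv
        obtain ⟨hvF, hvAB⟩ := hv
        obtain ⟨hvdiv, hvI⟩ := hFdiv v hvF
        simp only [Finset.mem_insert, Finset.mem_singleton] at hvAB
        push_neg at hvAB
        have hvmod : 2 ≤ v.1 % (k+4) := by
          by_contra hc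
          rcases hub_id v hvdiv (by omega) with hh | hh
          · exact hvAB.1 hh
          · exact hvAB.2 hh
        rw [Set.Finite.mem_toFinset]
        refine ⟨⟨hadiv.trans hvdiv.symm, by rw [hadiv]; exact hi, Or.inl ⟨hamod, hvmod⟩⟩, hvI⟩
      calc (F \ {A, B}).card ≤ _ := Finset.card_le_card hsub
        _ = ((gg n k).neighborSet a ∩ I).ncard :=
            (Set.ncard_eq_toFinset_card _ _).symm
        _ ≤ k := hI a haI
    have hcard2 : F.card ≤ 2 + (F \ {A, B}).card := by
      have hsub : F ⊆ insert A (insert B (F \ {A, B})) := by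
        intro v hv
        by_cases h1 : v = A
        · simp [h1]
        · by_cases h2 : v = B
          · simp [h2]
          · simp [Finset.mem_insert, Finset.mem_sdiff, hv, h1, h2]
      calc F.card ≤ (insert A (insert B (F \ {A, B}))).card := Finset.card_le_card hsub
        _ ≤ 1 + (insert B (F \ {A, B})).card := by
            rw [add_comm]; exact Finset.card_insert_le _ _
        _ ≤ 1 + (1 + (F \ {A, B}).card) := by
            gcongr
            rw [add_comm]; exact Finset.card_insert_le _ _
        _ = 2 + (F \ {A, B}).card := by ring
    by_cases hAI : A ∈ I
    · have := hub_bound A hAI hAdiv hAmod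
      omega
    · by_cases hBI : B ∈ I
      · have := hub_bound B hBI hBdiv hBmod
        omega
      · -- no hub in I
        have hge : ∀ v ∈ F, i * (k+4) + 2 ≤ v.1 ∧ v.1 < i * (k+4) + (k+4) := by
          intro v hv
          obtain ⟨hvdiv, hvI⟩ := hFdiv v hv
          have hd := Nat.div_add_mod v.1 (k+4)
          rw [hvdiv, Nat.mul_comm] at hd
          have hmlt : v.1 % (k+4) < k + 4 := Nat.mod_lt _ hkp
          constructor
          · by_contra hc
            rcases hub_id v hvdiv (by omega) with hh | hh
            · exact hAI (hh ▸ hvI)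
            · exact hBI (hh ▸ hvI)
          · omega
        have hinj : F.card ≤ (Finset.range (k+2)).card := by
          apply Finset.card_le_card_of_injOn (fun v => v.1 - (i * (k+4) + 2))
          · intro v hv
            have h1 := hge v hv
            simp only [Finset.mem_coe, Finset.mem_range]
            omega
          · intro v hv w hw hvw
            have h1 := hge v (Finset.mem_coe.mp hv)
            have h2 := hge w (Finset.mem_coe.mp hw)
            exact Fin.ext (by simp only at hvw; omega)
        simpa using hinj
  -- bound on the residual fiber
  have hres : (J.filter (fun v => min (v.1 / (k+4)) (n/(k+4)) = n/(k+4))).card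
      ≤ n - (n/(k+4)) * (k+4) := by
    set F := J.filter (fun v => min (v.1 / (k+4)) (n/(k+4)) = n/(k+4)) with hF
    have hge : ∀ v ∈ F, (n/(k+4)) * (k+4) ≤ v.1 := by
      intro v hv
      rw [hF, Finset.mem_filter] at hv
      have h1 : n/(k+4) ≤ v.1 / (k+4) := by omega
      calc (n/(k+4)) * (k+4) ≤ (v.1/(k+4)) * (k+4) := Nat.mul_le_mul_right _ h1
        _ ≤ v.1 := Nat.div_mul_le_self _ _
    have : F.card ≤ (Finset.range (n - (n/(k+4)) * (k+4))).card := by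
      apply Finset.card_le_card_of_injOn (fun v => v.1 - (n/(k+4)) * (k+4))
      · intro v hv
        have h1 := hge v hv
        have h2 := v.2
        simp only [Finset.mem_coe, Finset.mem_range]
        omega
      · intro v hv w hw hvw
        have h1 := hge v (Finset.mem_coe.mp hv)
        have h2 := hge w (Finset.mem_coe.mp hw)
        exact Fin.ext (by simp only at hvw; omega)
    simpa using this
  -- combine
  have hsum : J.card ≤ (n/(k+4)) * (k+2) + (n - (n/(k+4)) * (k+4)) := by
    rw [hsplit, Finset.sum_range_succ]
    have h1 : ∑ i ∈ Finset.range (n/(k+4)),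
        (J.filter (fun v => min (v.1 / (k+4)) (n/(k+4)) = i)).card ≤ (n/(k+4)) * (k+2) := by
      calc _ ≤ ∑ _i ∈ Finset.range (n/(k+4)), (k+2) := by
            apply Finset.sum_le_sum
            intro i hi
            exact hfiber i (Finset.mem_range.mp hi)
        _ = (n/(k+4)) * (k+2) := by rw [Finset.sum_const, Finset.card_range, smul_eq_mul]
    omega
  rw [hcard]
  have hmul : (n/(k+4)) * (k+2) + 2 * (n/(k+4)) = (n/(k+4)) * (k+4) := by ring
  omega

theorem stmt3 (n k : ℕ) (hn : 1 ≤ n) (hk : 3 ≤ k) :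
    ∃ G : SimpleGraph (Fin n), IsPlanar G ∧
      ∀ I : Set (Fin n), (∀ v ∈ I, ((G.neighborSet v) ∩ I).ncard ≤ k) →
        (I.ncard : ℝ) ≤ (((k : ℝ) + 2) / ((k : ℝ) + 4)) * (n : ℝ) + 2 := by
  refine ⟨gg n k, ⟨?_, ?_⟩, ?_⟩
  · refine gg_no_minor n k (completeGraph (Fin 5)) 0 1 2 3 (by decide) (by decide) (by decide)
      ?_ ?_ ?_ ?_
    · exact (by decide : (0 : Fin 5) ≠ 3)
    · exact (by decide : (1 : Fin 5) ≠ 3)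
    · exact (by decide : (2 : Fin 5) ≠ 3)
    · exact (by decide : ∀ b : Fin 5, ∃ b1 b2 b3 : Fin 5,
        b1 ≠ b2 ∧ b1 ≠ b3 ∧ b2 ≠ b3 ∧ b ≠ b1 ∧ b ≠ b2 ∧ b ≠ b3)
  · refine gg_no_minor n k (completeBipartiteGraph (Fin 3) (Fin 3))
      (Sum.inl 0) (Sum.inl 1) (Sum.inl 2) (Sum.inr 0)
      (by decide) (by decide) (by decide) ?_ ?_ ?_ ?_
    · exact Or.inl ⟨rfl, rfl⟩
    · exact Or.inl ⟨rfl, rfl⟩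
    · exact Or.inl ⟨rfl, rfl⟩
    · exact (by decide : ∀ b : Fin 3 ⊕ Fin 3, ∃ b1 b2 b3 : Fin 3 ⊕ Fin 3,
        b1 ≠ b2 ∧ b1 ≠ b3 ∧ b2 ≠ b3 ∧
        (b.isLeft ∧ b1.isRight ∨ b.isRight ∧ b1.isLeft) ∧
        (b.isLeft ∧ b2.isRight ∨ b.isRight ∧ b2.isLeft) ∧
        (b.isLeft ∧ b3.isRight ∨ b.isRight ∧ b3.isLeft))
  · intro I hI
    have hkp : 0 < k + 4 := by omega
    have hnat := gg_count n k hk I hI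
    have h2 : n < n/(k+4) * (k+4) + (k+4) := by
      have h0 := Nat.div_add_mod n (k+4)
      have h1 := Nat.mod_lt n hkp
      rw [Nat.mul_comm] at h0
      omega
    have hk4 : (0:ℝ) < (k:ℝ) + 4 := by positivity
    have c1 : (I.ncard : ℝ) + 2 * ((n/(k+4) : ℕ) : ℝ) ≤ (n : ℝ) := by exact_mod_cast hnat
    have c2 : (n : ℝ) < ((n/(k+4) : ℕ) : ℝ) * ((k:ℝ)+4) + ((k:ℝ)+4) := by exact_mod_cast h2
    have key : (I.ncard : ℝ) * ((k:ℝ)+4) ≤ ((k:ℝ)+2) * (n:ℝ) + 2*((k:ℝ)+4) := by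
      nlinarith [mul_le_mul_of_nonneg_right
        (by linarith : (I.ncard : ℝ) ≤ (n:ℝ) - 2 * ((n/(k+4) : ℕ) : ℝ)) hk4.le]
    calc (I.ncard : ℝ) = (I.ncard : ℝ) * ((k:ℝ)+4) / ((k:ℝ)+4) := by field_simp
      _ ≤ (((k:ℝ)+2) * (n:ℝ) + 2*((k:ℝ)+4)) / ((k:ℝ)+4) := by gcongr
      _ = ((k:ℝ)+2)/((k:ℝ)+4) * (n:ℝ) + 2 := by field_simp
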